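/- (Optimality of the design proportional to |(p_A − p_B)·y|.) Let 𝒮 be a finite set, let p_A, p_B be probability mass functions on 𝒮, let y : 𝒮 → ℝ, write δ(s) = (p_A(s) − p_B(s))·y(s), and suppose c = Σ_s |δ(s)| > 0. Define the design p*(s) = |δ(s)|/c. Then Σ_{s : p*(s) > 0} δ(s)² / p*(s) = c², and for every probability mass function p_Δ on 𝒮 with p_Δ(s) > 0 whenever δ(s) ≠ 0, one has Σ_{s : p_Δ(s) > 0} δ(s)² / p_Δ(s) ≥ c²; that is, p* minimizes the second moment Σ_{s : p_Δ(s) > 0} δ(s)² / p_Δ(s) over all such designs p_Δ. -/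

import Mathlib

/-- Optimality of the design proportional to `|(p_A − p_B)·y|`: with
`δ(s) = (p_A(s) − p_B(s))·y(s)`, `c = Σ_s |δ(s)| > 0` and `p*(s) = |δ(s)|/c`, the second moment
`Σ_{s : p*(s) > 0} δ(s)²/p*(s)` equals `c²`, and every design `p_Δ` with `p_Δ(s) > 0` whenever
`δ(s) ≠ 0` has second moment `Σ_{s : p_Δ(s) > 0} δ(s)²/p_Δ(s) ≥ c²`. -/
theorem optimal_design_proportional_to_delta
    {𝒮 : Type*} [Fintype 𝒮]
    (pA pB y : 𝒮 → ℝ)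
    (hA0 : ∀ s, 0 ≤ pA s) (hA1 : ∑ s, pA s = 1)
    (hB0 : ∀ s, 0 ≤ pB s) (hB1 : ∑ s, pB s = 1)
    (c : ℝ) (hc : c = ∑ s, |(pA s - pB s) * y s|) (hcpos : 0 < c) :
    (∑ s ∈ Finset.univ.filter (fun s => 0 < |(pA s - pB s) * y s| / c),
        ((pA s - pB s) * y s) ^ 2 / (|(pA s - pB s) * y s| / c) = c ^ 2) ∧
      (∀ pΔ : 𝒮 → ℝ, (∀ s, 0 ≤ pΔ s) → (∑ s, pΔ s = 1) →
        (∀ s, (pA s - pB s) * y s ≠ 0 → 0 < pΔ s) →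
          c ^ 2 ≤ ∑ s ∈ Finset.univ.filter (fun s => 0 < pΔ s),
            ((pA s - pB s) * y s) ^ 2 / pΔ s) := by
  set δ : 𝒮 → ℝ := fun s => (pA s - pB s) * y s with hδ
  constructor
  · have h1 : ∀ s ∈ Finset.univ.filter (fun s => 0 < |δ s| / c),
        δ s ^ 2 / (|δ s| / c) = c * |δ s| := by
      intro s hs
      simp only [Finset.mem_filter] at hs
      have habs : 0 < |δ s| := by
        by_contra h
        push_neg at h
        have : |δ s| = 0 := le_antisymm h (abs_nonneg _)
        rw [this] at hs
        simp at hs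
      have h2 : δ s ^ 2 = |δ s| ^ 2 := (sq_abs _).symm
      rw [h2, div_eq_iff (ne_of_gt (div_pos habs hcpos))]
      field_simp
    rw [Finset.sum_congr rfl h1]
    have h3 : ∑ s ∈ Finset.univ.filter (fun s => 0 < |δ s| / c), c * |δ s|
        = ∑ s, c * |δ s| := by
      refine Finset.sum_subset (Finset.filter_subset _ _) ?_
      intro s _ hs
      simp only [Finset.mem_filter, Finset.mem_univ, true_and, not_lt] at hs
      have : |δ s| / c ≤ 0 := hs
      have h0 : |δ s| ≤ 0 := by
        by_contra h
        push_neg at h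
        exact absurd (div_pos h hcpos) (not_lt.mpr this)
      have : |δ s| = 0 := le_antisymm h0 (abs_nonneg _)
      rw [this]; ring
    rw [h3, ← Finset.mul_sum, ← hc, sq]
  · intro pΔ h0 h1 hpos
    set T := Finset.univ.filter (fun s => 0 < pΔ s) with hT
    have hcT : c = ∑ s ∈ T, |δ s| := by
      rw [hc]
      refine (Finset.sum_subset (Finset.filter_subset _ _) ?_).symm
      intro s _ hs
      simp only [hT, Finset.mem_filter, Finset.mem_univ, true_and, not_lt] at hs
      have hz : pΔ s = 0 := le_antisymm hs (h0 s)
      by_contra h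
      have : δ s ≠ 0 := fun h' => h (abs_eq_zero.mpr h')
      exact absurd (hpos s this) (by rw [hz]; exact lt_irrefl 0)
    have hsed := Finset.sq_sum_div_le_sum_sq_div T (fun s => |δ s|)
      (g := pΔ) (fun s hs => by simpa [hT] using (Finset.mem_filter.mp hs).2)
    have hsum_le : ∑ s ∈ T, pΔ s ≤ 1 := by
      rw [← h1]
      exact Finset.sum_le_sum_of_subset_of_nonneg (Finset.filter_subset _ _)
        (fun s _ _ => h0 s)
    have hsum_pos : 0 < ∑ s ∈ T, pΔ s := by
      by_contra h
      push_neg at h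
      have : c ≤ 0 := by
        rw [hcT]
        have : ∀ s ∈ T, |δ s| = 0 := by
          intro s hs
          have hp : 0 < pΔ s := by simpa [hT] using (Finset.mem_filter.mp hs).2
          have := Finset.single_le_sum (f := pΔ) (fun i _ => h0 i) hs
          linarith
        simp [Finset.sum_congr rfl this]
      linarith
    have key : c ^ 2 / ∑ s ∈ T, pΔ s ≤ ∑ s ∈ T, δ s ^ 2 / pΔ s := by
      calc c ^ 2 / ∑ s ∈ T, pΔ s = (∑ s ∈ T, |δ s|) ^ 2 / ∑ s ∈ T, pΔ s := by rw [← hcT]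
        _ ≤ ∑ s ∈ T, |δ s| ^ 2 / pΔ s := hsed
        _ = ∑ s ∈ T, δ s ^ 2 / pΔ s := by simp [sq_abs]
    have : c ^ 2 ≤ c ^ 2 / ∑ s ∈ T, pΔ s := by
      rw [le_div_iff₀ hsum_pos]
      nlinarith [sq_nonneg c]
    linarith
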